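/- Let Φ : ℤ × ℝ → GL(m,ℝ) be a smooth (in t) invertible-matrix-valued function satisfying the semi-discrete transport equation Φ_t(k,t) = Φ(k+1,t) - Φ(k,t). Then φ(k,t) := Φ(k,t)·Φ(k-1,t)⁻¹ satisfies the semi-discrete matrix Riemann equation φ_t(k,t) = (φ(k+1,t) - φ(k,t))·φ(k,t). -/

import Mathlib

attribute [local instance] Matrix.normedAddCommGroup Matrix.normedSpace

open Matrix

private lemma mat_hasDerivAt_iff {n : ℕ} {f : ℝ → Matrix (Fin n) (Fin n) ℝ}
    {M : Matrix (Fin n) (Fin n) ℝ} {t : ℝ} :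
    HasDerivAt f M t ↔ ∀ i j, HasDerivAt (fun s => f s i j) (M i j) t := by
  refine hasDerivAt_pi.trans ?_
  exact forall_congr' fun i => hasDerivAt_pi

private lemma mat_hasDerivAt_mul {n : ℕ} {f g : ℝ → Matrix (Fin n) (Fin n) ℝ}
    {f' g' : Matrix (Fin n) (Fin n) ℝ} {t : ℝ}
    (hf : HasDerivAt f f' t) (hg : HasDerivAt g g' t) :
    HasDerivAt (fun s => f s * g s) (f' * g t + f t * g') t := by
  rw [mat_hasDerivAt_iff] at hf hg ⊢
  intro i j
  have h : ∀ l : Fin n, HasDerivAt (fun s => f s i l * g s l j)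
      (f' i l * g t l j + f t i l * g' l j) t := fun l => (hf i l).mul (hg l j)
  have := HasDerivAt.fun_sum (u := Finset.univ) (fun l _ => h l)
  simpa [Matrix.mul_apply, Matrix.add_apply, Finset.sum_add_distrib] using this

private lemma mat_diff_entry {n : ℕ} {f : ℝ → Matrix (Fin n) (Fin n) ℝ}
    {M : Matrix (Fin n) (Fin n) ℝ} {t : ℝ} (hf : HasDerivAt f M t) (i j : Fin n) :
    DifferentiableAt ℝ (fun s => f s i j) t :=
  (mat_hasDerivAt_iff.mp hf i j).differentiableAt

private lemma mat_diff_det {n : ℕ} {f : ℝ → Matrix (Fin n) (Fin n) ℝ} {t : ℝ}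
    (hf : ∀ i j, DifferentiableAt ℝ (fun s => f s i j) t) :
    DifferentiableAt ℝ (fun s => (f s).det) t := by
  simp only [Matrix.det_apply']
  refine DifferentiableAt.fun_sum fun σ _ => DifferentiableAt.const_mul ?_ _
  exact DifferentiableAt.fun_finsetProd fun i _ => hf (σ i) i

private lemma mat_diff_inv {n : ℕ} {f : ℝ → Matrix (Fin n) (Fin n) ℝ} {t : ℝ}
    (hf : ∀ i j, DifferentiableAt ℝ (fun s => f s i j) t)
    (hu : IsUnit (f t)) :
    DifferentiableAt ℝ (fun s => (f s)⁻¹) t := by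
  refine differentiableAt_pi.mpr ?_
  intro i
  refine differentiableAt_pi.mpr ?_
  intro j
  have hdet : (f t).det ≠ 0 := by
    have := (Matrix.isUnit_iff_isUnit_det (f t)).mp hu
    exact this.ne_zero
  have h1 : DifferentiableAt ℝ (fun s => ((f s).det)⁻¹) t :=
    (mat_diff_det hf).inv hdet
  have h2 : DifferentiableAt ℝ (fun s => (f s).adjugate i j) t := by
    simp only [Matrix.adjugate_apply]
    refine mat_diff_det fun a b => ?_
    simp only [Matrix.updateRow_apply]
    by_cases h : a = j
    · simp only [if_pos h]; exact differentiableAt_const _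
    · simpa [h] using hf a b
  have : (fun s => (f s)⁻¹ i j) = fun s => ((f s).det)⁻¹ * (f s).adjugate i j := by
    funext s
    rw [Matrix.inv_def]
    simp [Ring.inverse_eq_inv']
  rw [this]
  exact h1.mul h2

/-- Semi-discrete Cole-Hopf transformation.  If the invertible-matrix-valued
`Φ(k,t)` satisfies the semi-discrete transport equation `Φ_t(k,t) = Φ(k+1,t) - Φ(k,t)`,
then `φ(k,t) := Φ(k,t)·Φ(k-1,t)⁻¹` satisfies the semi-discrete matrix Riemann equation
`φ_t = (φ⁺ - φ)·φ`. -/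
theorem stmt_4 {m : ℕ} (Φ : ℤ → ℝ → Matrix (Fin m) (Fin m) ℝ)
    (hinv : ∀ k t, IsUnit (Φ k t))
    (hΦ : ∀ k t, HasDerivAt (Φ k) (Φ (k + 1) t - Φ k t) t)
    (φ : ℤ → ℝ → Matrix (Fin m) (Fin m) ℝ)
    (hφ : ∀ k t, φ k t = Φ k t * (Φ (k - 1) t)⁻¹) :
    ∀ k t, HasDerivAt (φ k) ((φ (k + 1) t - φ k t) * φ k t) t := by
  intro k t
  set A := Φ k t with hA
  set B := Φ (k - 1) t with hB
  set C := Φ (k + 1) t with hC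
  have hu : IsUnit B := hinv (k - 1) t
  have huA : IsUnit A := hinv k t
  have hdB : HasDerivAt (Φ (k - 1)) (A - B) t := by
    have := hΦ (k - 1) t
    simpa [show k - 1 + 1 = k by ring, ← hA, ← hB] using this
  -- the inverse is differentiable
  have hdiff : DifferentiableAt ℝ (fun s => (Φ (k - 1) s)⁻¹) t :=
    mat_diff_inv (fun i j => mat_diff_entry hdB i j) hu
  obtain ⟨g', hg'⟩ : ∃ g', HasDerivAt (fun s => (Φ (k - 1) s)⁻¹) g' t :=
    ⟨_, hdiff.hasDerivAt⟩
  -- identify g' via the product rule applied to Φ(k-1) * Φ(k-1)⁻¹ = 1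
  have hone : (fun s => Φ (k - 1) s * (Φ (k - 1) s)⁻¹) = fun _ => (1 : Matrix (Fin m) (Fin m) ℝ) := by
    funext s
    exact Matrix.mul_nonsing_inv _ ((Matrix.isUnit_iff_isUnit_det _).mp (hinv (k - 1) s))
  have hprod := mat_hasDerivAt_mul hdB hg'
  have hzero : (A - B) * B⁻¹ + B * g' = 0 := by
    have h0 : HasDerivAt (fun s => Φ (k - 1) s * (Φ (k - 1) s)⁻¹) 0 t := by
      rw [hone]; exact hasDerivAt_const t 1
    exact hprod.unique h0
  have hBinv : B⁻¹ * B = 1 := Matrix.nonsing_inv_mul _ ((Matrix.isUnit_iff_isUnit_det B).mp hu)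
  have hBinv' : B * B⁻¹ = 1 := Matrix.mul_nonsing_inv _ ((Matrix.isUnit_iff_isUnit_det B).mp hu)
  have hAinv : A⁻¹ * A = 1 := Matrix.nonsing_inv_mul _ ((Matrix.isUnit_iff_isUnit_det A).mp huA)
  have hg'eq : g' = -(B⁻¹ * ((A - B) * B⁻¹)) := by
    have := congrArg (fun X => B⁻¹ * X) hzero
    simp only [mul_add, ← mul_assoc, hBinv, one_mul, mul_zero] at this
    linear_combination (norm := noncomm_ring) this
  -- product rule for φ k
  have hmul := mat_hasDerivAt_mul (hΦ k t) hg'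
  have hfun : φ k = fun s => Φ k s * (Φ (k - 1) s)⁻¹ := funext fun s => hφ k s
  rw [hfun]
  convert hmul using 1
  have h1 : φ (k + 1) t = C * A⁻¹ := by
    rw [hφ]; simp [show k + 1 - 1 = k by ring, ← hA, ← hC]
  have h2 : φ k t = A * B⁻¹ := hφ k t
  have h2' : (fun s => Φ k s * (Φ (k - 1) s)⁻¹) t = A * B⁻¹ := rfl
  rw [h2', h1, hg'eq, ← hA, ← hB, ← hC]
  have hCA : C * A⁻¹ * (A * B⁻¹) = C * B⁻¹ := by
    rw [mul_assoc, ← mul_assoc A⁻¹, hAinv, one_mul]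
  rw [sub_mul, hCA]
  have expand : A * -(B⁻¹ * ((A - B) * B⁻¹)) = -(A * B⁻¹ * (A * B⁻¹)) + A * B⁻¹ := by
    rw [sub_mul, mul_sub, hBinv', mul_one]
    noncomm_ring
  rw [expand]
  noncomm_ring
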